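/- arXiv:1712.02056 — 5 statements merged into one kernel-verified Lean document; each statement's English description precedes it below -/
import Mathlib

section
/- For ω ∈ (−1,1), let φ_ω(x) = √(2(1−ω²)) · sech(√(1−ω²)·x), φ₀ = φ_{ω=0}, and set E(Φ_ω) = ½(1+ω²)·∫φ_ω² + ½∫(φ_ω')² − ¼∫φ_ω⁴ and Q(Φ_ω) = ω·∫φ_ω². Then 3·E(Φ_ω) − 4ω·Q(Φ_ω) = (1−2ω²)·∫φ_ω² = (1−2ω²)·√(1−ω²)·∫φ₀². -/
open Real Set MeasureTheory

open Filter Topology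

noncomputable def T (x : ℝ) : ℝ := Real.sinh x / Real.cosh x

lemma hasDerivAt_T (x : ℝ) : HasDerivAt T ((1 / Real.cosh x) ^ 2) x := by
  have h := (Real.hasDerivAt_sinh x).div (Real.hasDerivAt_cosh x) (Real.cosh_pos x).ne'
  refine h.congr_deriv ?_
  have := Real.cosh_sq_sub_sinh_sq x
  field_simp
  nlinarith [Real.cosh_pos x]

lemma T_eq (x : ℝ) : T x = (1 - Real.exp (-(2*x))) / (1 + Real.exp (-(2*x))) := by
  have h1 : Real.exp (-(2*x)) = Real.exp (-x) / Real.exp x := by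
    rw [← Real.exp_sub]; ring_nf
  have h2 : Real.exp x * Real.exp (-x) = 1 := by rw [← Real.exp_add]; simp
  have h3 : (0:ℝ) < Real.exp x + Real.exp (-x) := by positivity
  unfold T
  rw [Real.sinh_eq, Real.cosh_eq, h1]
  field_simp

lemma tendsto_T_atTop : Tendsto T atTop (𝓝 1) := by
  have hexp : Tendsto (fun x : ℝ => Real.exp (-(2*x))) atTop (𝓝 0) := by
    apply Real.tendsto_exp_atBot.comp
    have : Tendsto (fun x : ℝ => 2*x) atTop atTop :=
      Tendsto.const_mul_atTop two_pos tendsto_id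
    exact tendsto_neg_atBot_iff.mpr this
  have := ((tendsto_const_nhds.sub hexp).div (tendsto_const_nhds.add hexp)
    (by norm_num) : Tendsto (fun x : ℝ => (1 - Real.exp (-(2*x))) / (1 + Real.exp (-(2*x)))) atTop (𝓝 ((1-0)/(1+0))))
  simp only [sub_zero, add_zero, div_one] at this
  exact this.congr (fun x => (T_eq x).symm)

lemma tendsto_T_atBot : Tendsto T atBot (𝓝 (-1)) := by
  have h := (tendsto_T_atTop.comp tendsto_neg_atBot_atTop).neg
  simp only [Function.comp] at h
  have : (fun x : ℝ => -T (-x)) = T := by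
    funext x; unfold T; simp [neg_div]
  rwa [this] at h

lemma cosh_sq_ge (x : ℝ) : 1 + x^2 ≤ Real.cosh x ^ 2 := by
  have h1 : |x| ≤ |Real.sinh x| := by
    rw [Real.abs_sinh]
    exact (Real.self_le_sinh_iff.mpr (abs_nonneg x)).trans_eq rfl
  have h2 : x^2 ≤ Real.sinh x ^ 2 := by
    rw [← sq_abs x, ← sq_abs (Real.sinh x)]
    exact pow_le_pow_left₀ (abs_nonneg x) h1 2
  nlinarith [Real.cosh_sq x]

lemma integrable_sech_sq : Integrable (fun x : ℝ => (1 / Real.cosh x) ^ 2) := by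
  refine integrable_inv_one_add_sq.mono ?_ ?_
  · exact (Continuous.div continuous_const Real.continuous_cosh
      (fun x => (Real.cosh_pos x).ne')).pow 2 |>.aestronglyMeasurable
  · refine Filter.Eventually.of_forall fun x => ?_
    have h1 : (0:ℝ) < 1 + x^2 := by positivity
    have h2 : (0:ℝ) < Real.cosh x ^ 2 := by positivity
    rw [Real.norm_eq_abs, Real.norm_eq_abs, abs_of_nonneg (by positivity),
      abs_of_nonneg (by positivity : (0:ℝ) ≤ (1+x^2)⁻¹)]
    rw [div_pow, one_pow]
    rw [div_le_iff₀ h2, inv_mul_eq_div, le_div_iff₀ h1]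
    nlinarith [cosh_sq_ge x]

lemma integrable_aux {f : ℝ → ℝ} (hc : Continuous f)
    (hb : ∀ x, |f x| ≤ (1 / Real.cosh x) ^ 2) : Integrable f := by
  refine integrable_sech_sq.mono hc.aestronglyMeasurable ?_
  refine Filter.Eventually.of_forall fun x => ?_
  rw [Real.norm_eq_abs, Real.norm_eq_abs, abs_of_nonneg (by positivity : (0:ℝ) ≤ (1 / Real.cosh x)^2)]
  exact hb x

lemma sinh_sq_le (x : ℝ) : Real.sinh x ^ 2 ≤ Real.cosh x ^ 2 := by
  nlinarith [Real.cosh_sq x]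

lemma integral_sech_sq : ∫ x : ℝ, (1 / Real.cosh x) ^ 2 = 2 := by
  have h := integral_of_hasDerivAt_of_tendsto (f := T)
    (f' := fun x => (1 / Real.cosh x) ^ 2) (fun x => hasDerivAt_T x)
    integrable_sech_sq tendsto_T_atBot tendsto_T_atTop
  rw [h]; norm_num

lemma integral_sinh_sq_div_cosh_pow_four :
    ∫ x : ℝ, (Real.sinh x / Real.cosh x ^ 2) ^ 2 = 2 / 3 := by
  have hder : ∀ x : ℝ, HasDerivAt (fun y => (T y) ^ 3 / 3)
      ((Real.sinh x / Real.cosh x ^ 2) ^ 2) x := by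
    intro x
    have h := ((hasDerivAt_T x).pow 3).div_const 3
    refine h.congr_deriv ?_
    have hc := (Real.cosh_pos x).ne'
    unfold T
    rw [show (3:ℕ) - 1 = 2 from rfl]
    push_cast
    field_simp
  have hint : Integrable (fun x : ℝ => (Real.sinh x / Real.cosh x ^ 2) ^ 2) := by
    refine integrable_aux ?_ ?_
    · exact (Real.continuous_sinh.div (Real.continuous_cosh.pow 2)
        (fun x => (pow_pos (Real.cosh_pos x) 2).ne')).pow 2
    · intro x
      have hc : (0:ℝ) < Real.cosh x := Real.cosh_pos x
      rw [abs_of_nonneg (by positivity)]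
      rw [div_pow, div_pow, one_pow]
      rw [div_le_div_iff₀ (by positivity) (by positivity)]
      calc Real.sinh x ^ 2 * Real.cosh x ^ 2 ≤ Real.cosh x ^ 2 * Real.cosh x ^ 2 := by
            nlinarith [sinh_sq_le x]
        _ = (Real.cosh x ^ 2) ^ 2 := by ring
        _ ≤ 1 * (Real.cosh x ^ 2) ^ 2 := by nlinarith [sq_nonneg (Real.cosh x ^ 2)]
  have hbot : Tendsto (fun y => (T y) ^ 3 / 3) atBot (𝓝 ((-1:ℝ)^3/3)) :=
    ((tendsto_T_atBot.pow 3).div_const 3)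
  have htop : Tendsto (fun y => (T y) ^ 3 / 3) atTop (𝓝 ((1:ℝ)^3/3)) :=
    ((tendsto_T_atTop.pow 3).div_const 3)
  rw [integral_of_hasDerivAt_of_tendsto hder hint hbot htop]
  norm_num

lemma integral_sech_pow_four : ∫ x : ℝ, (1 / Real.cosh x) ^ 4 = 4 / 3 := by
  have hder : ∀ x : ℝ, HasDerivAt (fun y => T y - (T y) ^ 3 / 3)
      ((1 / Real.cosh x) ^ 4) x := by
    intro x
    have h := (hasDerivAt_T x).sub (((hasDerivAt_T x).pow 3).div_const 3)
    refine h.congr_deriv ?_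
    have hc := (Real.cosh_pos x).ne'
    have hid := Real.cosh_sq_sub_sinh_sq x
    unfold T
    rw [show (3:ℕ) - 1 = 2 from rfl]
    push_cast
    field_simp
    linear_combination hid
  have hint : Integrable (fun x : ℝ => (1 / Real.cosh x) ^ 4) := by
    refine integrable_aux ?_ ?_
    · exact (Continuous.div continuous_const Real.continuous_cosh
        (fun x => (Real.cosh_pos x).ne')).pow 4
    · intro x
      have hc : (0:ℝ) < Real.cosh x := Real.cosh_pos x
      have h1 : (1:ℝ) ≤ Real.cosh x := Real.one_le_cosh x
      rw [abs_of_nonneg (by positivity)]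
      have : (1 / Real.cosh x) ≤ 1 := by
        rw [div_le_one hc]; exact h1
      calc (1 / Real.cosh x) ^ 4 = (1/Real.cosh x)^2 * (1/Real.cosh x)^2 := by ring
        _ ≤ 1 * (1/Real.cosh x)^2 := by
            apply mul_le_mul_of_nonneg_right _ (by positivity)
            calc (1/Real.cosh x)^2 ≤ 1^2 := pow_le_pow_left₀ (by positivity) this 2
              _ = 1 := one_pow 2
        _ = (1/Real.cosh x)^2 := one_mul _
  have hbot : Tendsto (fun y => T y - (T y) ^ 3 / 3) atBot (𝓝 ((-1:ℝ) - (-1:ℝ)^3/3)) :=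
    tendsto_T_atBot.sub ((tendsto_T_atBot.pow 3).div_const 3)
  have htop : Tendsto (fun y => T y - (T y) ^ 3 / 3) atTop (𝓝 ((1:ℝ) - (1:ℝ)^3/3)) :=
    tendsto_T_atTop.sub ((tendsto_T_atTop.pow 3).div_const 3)
  rw [integral_of_hasDerivAt_of_tendsto hder hint hbot htop]
  norm_num

lemma integral_comp_k (g : ℝ → ℝ) {k : ℝ} (hk : 0 < k) :
    ∫ x : ℝ, g (k * x) = (1 / k) * ∫ y : ℝ, g y := by
  rw [MeasureTheory.Measure.integral_comp_mul_left g k, smul_eq_mul,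
    abs_of_nonneg (by positivity : (0:ℝ) ≤ k⁻¹), one_div]


/-- The ground-state soliton of the KGZ standing-wave equation. -/
noncomputable def phiSol (ω : ℝ) (x : ℝ) : ℝ :=
  Real.sqrt (2 * (1 - ω ^ 2)) * (1 / Real.cosh (Real.sqrt (1 - ω ^ 2) * x))


lemma sq_integral (ω : ℝ) (hω : ω ^ 2 < 1) :
    ∫ x : ℝ, (phiSol ω x) ^ 2 = 4 * Real.sqrt (1 - ω ^ 2) := by
  set k := Real.sqrt (1 - ω ^ 2) with hkdef
  have h1 : (0:ℝ) < 1 - ω ^ 2 := by linarith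
  have hk : 0 < k := Real.sqrt_pos.mpr h1
  have hk2 : k ^ 2 = 1 - ω ^ 2 := Real.sq_sqrt h1.le
  have hA : Real.sqrt (2 * (1 - ω ^ 2)) ^ 2 = 2 * k ^ 2 := by
    rw [Real.sq_sqrt (by linarith), hk2]
  have : ∀ x : ℝ, (phiSol ω x) ^ 2 = 2 * k ^ 2 * ((fun y => (1 / Real.cosh y) ^ 2) (k * x)) := by
    intro x
    simp only [phiSol, mul_pow, hA, ← hkdef]
  calc ∫ x : ℝ, (phiSol ω x) ^ 2
      = ∫ x : ℝ, 2 * k ^ 2 * ((fun y => (1 / Real.cosh y) ^ 2) (k * x)) :=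
        integral_congr_ae (Filter.Eventually.of_forall this)
    _ = 2 * k ^ 2 * ∫ x : ℝ, (fun y => (1 / Real.cosh y) ^ 2) (k * x) := integral_const_mul _ _
    _ = 2 * k ^ 2 * ((1 / k) * ∫ y : ℝ, (1 / Real.cosh y) ^ 2) := by
        exact congrArg _ (integral_comp_k (fun y => (1 / Real.cosh y) ^ 2) hk)
    _ = 4 * k := by
        rw [integral_sech_sq]
        field_simp
        ring

lemma quartic_integral (ω : ℝ) (hω : ω ^ 2 < 1) :
    ∫ x : ℝ, (phiSol ω x) ^ 4 = (16 / 3) * Real.sqrt (1 - ω ^ 2) ^ 3 := by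
  set k := Real.sqrt (1 - ω ^ 2) with hkdef
  have h1 : (0:ℝ) < 1 - ω ^ 2 := by linarith
  have hk : 0 < k := Real.sqrt_pos.mpr h1
  have hk2 : k ^ 2 = 1 - ω ^ 2 := Real.sq_sqrt h1.le
  have hA : Real.sqrt (2 * (1 - ω ^ 2)) ^ 4 = 4 * k ^ 4 := by
    have : Real.sqrt (2 * (1 - ω ^ 2)) ^ 4 = (Real.sqrt (2 * (1 - ω ^ 2)) ^ 2) ^ 2 := by ring
    rw [this, Real.sq_sqrt (by linarith), ← hk2]; ring
  have heq : ∀ x : ℝ, (phiSol ω x) ^ 4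
      = 4 * k ^ 4 * ((fun y => (1 / Real.cosh y) ^ 4) (k * x)) := by
    intro x
    simp only [phiSol, mul_pow, hA, ← hkdef]
  calc ∫ x : ℝ, (phiSol ω x) ^ 4
      = ∫ x : ℝ, 4 * k ^ 4 * ((fun y => (1 / Real.cosh y) ^ 4) (k * x)) :=
        integral_congr_ae (Filter.Eventually.of_forall heq)
    _ = 4 * k ^ 4 * ∫ x : ℝ, (fun y => (1 / Real.cosh y) ^ 4) (k * x) := integral_const_mul _ _
    _ = 4 * k ^ 4 * ((1 / k) * ∫ y : ℝ, (1 / Real.cosh y) ^ 4) := by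
        exact congrArg _ (integral_comp_k (fun y => (1 / Real.cosh y) ^ 4) hk)
    _ = (16 / 3) * k ^ 3 := by
        rw [integral_sech_pow_four]
        field_simp
        ring

lemma deriv_phiSol (ω : ℝ) (hω : ω ^ 2 < 1) (x : ℝ) :
    deriv (phiSol ω) x = -(Real.sqrt (2 * (1 - ω ^ 2)) * Real.sqrt (1 - ω ^ 2)) *
      (Real.sinh (Real.sqrt (1 - ω ^ 2) * x) / Real.cosh (Real.sqrt (1 - ω ^ 2) * x) ^ 2) := by
  set k := Real.sqrt (1 - ω ^ 2) with hkdef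
  set c := Real.sqrt (2 * (1 - ω ^ 2)) with hcdef
  have hin : HasDerivAt (fun y : ℝ => k * y) k x := by
    simpa using (hasDerivAt_id x).const_mul k
  have hc : HasDerivAt (fun y => Real.cosh (k * y)) (Real.sinh (k * x) * k) x :=
    (Real.hasDerivAt_cosh (k * x)).comp x hin
  have hinv : HasDerivAt (fun y => (Real.cosh (k * y))⁻¹)
      (-(Real.sinh (k * x) * k) / Real.cosh (k * x) ^ 2) x :=
    hc.inv (Real.cosh_pos _).ne'
  have hphi : HasDerivAt (phiSol ω)
      (-(c * k) * (Real.sinh (k * x) / Real.cosh (k * x) ^ 2)) x := by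
    have := hinv.const_mul c
    refine HasDerivAt.congr_deriv ?_ ?_ (f' := c * (-(Real.sinh (k * x) * k) / Real.cosh (k * x) ^ 2))
    · convert this using 1
      · exact rfl
      · funext y; simp [phiSol, one_div, ← hkdef, ← hcdef]
    · field_simp
  exact hphi.deriv

lemma deriv_sq_integral (ω : ℝ) (hω : ω ^ 2 < 1) :
    ∫ x : ℝ, (deriv (phiSol ω) x) ^ 2 = (4 / 3) * Real.sqrt (1 - ω ^ 2) ^ 3 := by
  set k := Real.sqrt (1 - ω ^ 2) with hkdef
  have h1 : (0:ℝ) < 1 - ω ^ 2 := by linarith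
  have hk : 0 < k := Real.sqrt_pos.mpr h1
  have hk2 : k ^ 2 = 1 - ω ^ 2 := Real.sq_sqrt h1.le
  have hA : Real.sqrt (2 * (1 - ω ^ 2)) ^ 2 = 2 * k ^ 2 := by
    rw [Real.sq_sqrt (by linarith), hk2]
  have heq : ∀ x : ℝ, (deriv (phiSol ω) x) ^ 2
      = 2 * k ^ 4 * ((fun y => (Real.sinh y / Real.cosh y ^ 2) ^ 2) (k * x)) := by
    intro x
    rw [deriv_phiSol ω hω x]
    simp only [← hkdef, mul_pow, neg_mul, neg_neg, even_two, Even.neg_pow]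
    rw [hA]
    ring
  calc ∫ x : ℝ, (deriv (phiSol ω) x) ^ 2
      = ∫ x : ℝ, 2 * k ^ 4 * ((fun y => (Real.sinh y / Real.cosh y ^ 2) ^ 2) (k * x)) :=
        integral_congr_ae (Filter.Eventually.of_forall heq)
    _ = 2 * k ^ 4 * ∫ x : ℝ, (fun y => (Real.sinh y / Real.cosh y ^ 2) ^ 2) (k * x) :=
        integral_const_mul _ _
    _ = 2 * k ^ 4 * ((1 / k) * ∫ y : ℝ, (Real.sinh y / Real.cosh y ^ 2) ^ 2) := by
        exact congrArg _ (integral_comp_k (fun y => (Real.sinh y / Real.cosh y ^ 2) ^ 2) hk)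
    _ = (4 / 3) * k ^ 3 := by
        rw [integral_sinh_sq_div_cosh_pow_four]
        field_simp
        ring


/-- For `ω ∈ (-1,1)`, with `E(Φ_ω) = ½(1+ω²)∫φ_ω² + ½∫(φ_ω')² - ¼∫φ_ω⁴` and
`Q(Φ_ω) = ω∫φ_ω²`, one has
`3E(Φ_ω) - 4ωQ(Φ_ω) = (1-2ω²)∫φ_ω² = (1-2ω²)√(1-ω²)∫φ₀²`. -/
theorem three_energy_minus_four_charge (ω : ℝ) (hω : ω ∈ Ioo (-1 : ℝ) 1)
    (E Q : ℝ)
    (hE : E = (1 / 2) * (1 + ω ^ 2) * (∫ x : ℝ, (phiSol ω x) ^ 2)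
        + (1 / 2) * (∫ x : ℝ, (deriv (phiSol ω) x) ^ 2)
        - (1 / 4) * (∫ x : ℝ, (phiSol ω x) ^ 4))
    (hQ : Q = ω * ∫ x : ℝ, (phiSol ω x) ^ 2) :
    3 * E - 4 * ω * Q = (1 - 2 * ω ^ 2) * (∫ x : ℝ, (phiSol ω x) ^ 2) ∧
    3 * E - 4 * ω * Q
      = (1 - 2 * ω ^ 2) * Real.sqrt (1 - ω ^ 2) * (∫ x : ℝ, (phiSol 0 x) ^ 2) := by

  have hω2 : ω ^ 2 < 1 := by
    obtain ⟨h1, h2⟩ := hω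
    nlinarith
  have h1 : (0:ℝ) < 1 - ω ^ 2 := by linarith
  set k := Real.sqrt (1 - ω ^ 2) with hkdef
  have hk : 0 < k := Real.sqrt_pos.mpr h1
  have hk2 : k ^ 2 = 1 - ω ^ 2 := Real.sq_sqrt h1.le
  have h0 : ∫ x : ℝ, (phiSol 0 x) ^ 2 = 4 := by
    rw [sq_integral 0 (by norm_num)]
    norm_num
  rw [hE, hQ, sq_integral ω hω2, deriv_sq_integral ω hω2, quartic_integral ω hω2, h0, ← hkdef]
  constructor
  · linear_combination (-2 * k) * hk2
  · linear_combination (-2 * k) * hk2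
end

section
/- For ω ∈ (−1,1), let φ_ω(x) = √(2(1−ω²)) · sech(√(1−ω²)·x) and φ₀ = φ_{ω=0}. Then the energy of the standing-wave state admits the closed form E(Φ_ω) := ½(1+ω²)·∫φ_ω² + ½∫(φ_ω')² − ¼∫φ_ω⁴ = ((1+2ω²)·√(1−ω²)/3) · ∫φ₀². -/
open Real Set MeasureTheory Filter Topology

lemma hasDerivAt_tanh' (x : ℝ) : HasDerivAt Real.tanh (1 / Real.cosh x ^ 2) x := by
  have h := (Real.hasDerivAt_sinh x).div (Real.hasDerivAt_cosh x) (Real.cosh_pos x).ne'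
  have hfun : (fun y => Real.sinh y / Real.cosh y) = Real.tanh := by
    funext y; rw [Real.tanh_eq_sinh_div_cosh]
  rw [show (Real.sinh / Real.cosh) = (fun y => Real.sinh y / Real.cosh y) from rfl, hfun] at h
  refine h.congr_deriv ?_
  have := Real.cosh_sq_sub_sinh_sq x
  field_simp
  nlinarith [this]

lemma tanh_mem_Ioo (x : ℝ) : Real.tanh x ∈ Ioo (-1 : ℝ) 1 := by
  have h1 : Real.cosh x - Real.sinh x = Real.exp (-x) := Real.cosh_sub_sinh x
  have h2 : Real.cosh x + Real.sinh x = Real.exp x := Real.cosh_add_sinh x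
  have hc := Real.cosh_pos x
  have e1 := Real.exp_pos (-x)
  have e2 := Real.exp_pos x
  rw [Real.tanh_eq_sinh_div_cosh]
  constructor
  · rw [lt_div_iff₀ hc]; nlinarith
  · rw [div_lt_iff₀ hc]; nlinarith

lemma tendsto_tanh_atTop : Tendsto Real.tanh atTop (𝓝 1) := by
  have key : ∀ x : ℝ, Real.tanh x = 1 - 2 / (Real.exp (2 * x) + 1) := by
    intro x
    rw [Real.tanh_eq_sinh_div_cosh, Real.sinh_eq, Real.cosh_eq]
    have he : Real.exp (2 * x) = Real.exp x * Real.exp x := by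
      rw [two_mul, Real.exp_add]
    have h1 : Real.exp x * Real.exp (-x) = 1 := by
      rw [← Real.exp_add]; simp
    have hx := Real.exp_pos x
    have hxn := Real.exp_pos (-x)
    have hden : Real.exp x + Real.exp (-x) ≠ 0 := by positivity
    have hden2 : Real.exp (2 * x) + 1 ≠ 0 := by positivity
    field_simp
    have he' : Real.exp (x * 2) = Real.exp x * Real.exp x := by rw [mul_comm, he]
    linear_combination (-2 * Real.exp x) * h1 + (-2 * Real.exp (-x)) * he'
  have h2 : Tendsto (fun x : ℝ => Real.exp (2 * x) + 1) atTop atTop := by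
    apply tendsto_atTop_add_const_right
    exact Real.tendsto_exp_atTop.comp (tendsto_id.const_mul_atTop two_pos)
  have h3 : Tendsto (fun x : ℝ => 1 - 2 / (Real.exp (2 * x) + 1)) atTop (𝓝 (1 - 0)) :=
    tendsto_const_nhds.sub (Tendsto.div_atTop tendsto_const_nhds h2)
  rw [sub_zero] at h3
  exact h3.congr fun x => (key x).symm

/-- Key improper-integral lemma. -/
lemma integral_tanh_sech (k : ℝ) (hk : 0 < k) (g G : ℝ → ℝ)
    (hG : ∀ t, HasDerivAt G (g t) t)
    (hge : ∀ t, g (-t) = g t)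
    (hgpos : ∀ t ∈ Ioo (-1 : ℝ) 1, 0 ≤ g t) :
    ∫ x : ℝ, g (Real.tanh (k * x)) / Real.cosh (k * x) ^ 2 = 2 * (G 1 - G 0) / k := by
  set I : ℝ → ℝ := fun x => g (Real.tanh (k * x)) / Real.cosh (k * x) ^ 2 with hI
  have hF : ∀ x : ℝ, HasDerivAt (fun y => G (Real.tanh (k * y)) / k) (I x) x := by
    intro x
    have h1 : HasDerivAt (fun y : ℝ => k * y) k x := by
      simpa using (hasDerivAt_id x).const_mul k
    have h2 : HasDerivAt (fun y => Real.tanh (k * y)) (1 / Real.cosh (k * x) ^ 2 * k) x :=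
      (hasDerivAt_tanh' (k * x)).comp x h1
    have h3 : HasDerivAt (fun y => G (Real.tanh (k * y)))
        (g (Real.tanh (k * x)) * (1 / Real.cosh (k * x) ^ 2 * k)) x :=
      (hG (Real.tanh (k * x))).comp x h2
    have h4 := h3.div_const k
    refine h4.congr_deriv ?_
    have hc := (Real.cosh_pos (k * x)).ne'
    rw [hI]
    field_simp
  have hGd : Differentiable ℝ G := fun t => (hG t).differentiableAt
  have hGcont : Continuous G := hGd.continuous
  have htop : Tendsto (fun y => G (Real.tanh (k * y)) / k) atTop (𝓝 (G 1 / k)) := by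
    have h1 : Tendsto (fun y : ℝ => k * y) atTop atTop := tendsto_id.const_mul_atTop hk
    have h2 : Tendsto (fun y => Real.tanh (k * y)) atTop (𝓝 1) := tendsto_tanh_atTop.comp h1
    exact ((hGcont.continuousAt.tendsto).comp h2).div_const k
  have hIpos : ∀ x : ℝ, 0 ≤ I x := by
    intro x
    apply div_nonneg (hgpos _ (tanh_mem_Ioo _))
    positivity
  have hIoi : ∫ x in Ioi (0 : ℝ), I x = G 1 / k - G 0 / k := by
    have := integral_Ioi_of_hasDerivAt_of_nonneg' (a := 0)
      (fun x _ => hF x) (fun x _ => hIpos x) htop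
    simpa [Real.tanh_zero] using this
  have heven : ∀ x : ℝ, I |x| = I x := by
    intro x
    rcases abs_cases x with ⟨h, _⟩ | ⟨h, _⟩
    · rw [h]
    · rw [h, hI]
      simp only [mul_neg, Real.tanh_neg, Real.cosh_neg, hge]
  calc ∫ x : ℝ, I x = ∫ x : ℝ, I |x| := by simp only [heven]
    _ = 2 * ∫ x in Ioi (0 : ℝ), I x := integral_comp_abs
    _ = 2 * (G 1 - G 0) / k := by rw [hIoi]; ring

/-- For `ω ∈ (-1,1)`, the energy of the standing-wave state has the closed form
`E(Φ_ω) = ½(1+ω²)∫φ_ω² + ½∫(φ_ω')² - ¼∫φ_ω⁴ = ((1+2ω²)√(1-ω²)/3)∫φ₀²`. -/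
theorem energy_closed_form (ω : ℝ) (hω : ω ∈ Ioo (-1 : ℝ) 1) :
    (1 / 2) * (1 + ω ^ 2) * (∫ x : ℝ, (phiSol ω x) ^ 2)
      + (1 / 2) * (∫ x : ℝ, (deriv (phiSol ω) x) ^ 2)
      - (1 / 4) * (∫ x : ℝ, (phiSol ω x) ^ 4)
    = ((1 + 2 * ω ^ 2) * Real.sqrt (1 - ω ^ 2) / 3) * (∫ x : ℝ, (phiSol 0 x) ^ 2) := by
  obtain ⟨hω1, hω2⟩ := hω
  have hω3 : ω ^ 2 < 1 := by nlinarith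
  set k : ℝ := Real.sqrt (1 - ω ^ 2) with hkdef
  have hk2 : k ^ 2 = 1 - ω ^ 2 := Real.sq_sqrt (by nlinarith)
  have hk : 0 < k := Real.sqrt_pos.mpr (by nlinarith)
  set c : ℝ := Real.sqrt (2 * (1 - ω ^ 2)) with hcdef
  have hc2 : c ^ 2 = 2 * k ^ 2 := by rw [hk2]; exact Real.sq_sqrt (by nlinarith)
  -- integral 1 : ∫ φ² = 4k
  have e1 : ∀ x : ℝ, phiSol ω x ^ 2 = (2 * k ^ 2) / Real.cosh (k * x) ^ 2 := by
    intro x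
    have hc := (Real.cosh_pos (k * x)).ne'
    rw [phiSol]
    rw [← hkdef, ← hcdef]
    field_simp
    nlinarith [hc2]
  have I1 : ∫ x : ℝ, phiSol ω x ^ 2 = 4 * k := by
    have := integral_tanh_sech k hk (fun _ => 2 * k ^ 2) (fun t => 2 * k ^ 2 * t)
      (fun t => by simpa using (hasDerivAt_id t).const_mul (2 * k ^ 2))
      (fun t => rfl) (fun t _ => by positivity)
    simp only [e1]
    rw [this]
    field_simp
    ring
  -- derivative
  have hderiv : ∀ x : ℝ, deriv (phiSol ω) x
      = c * (-(Real.sinh (k * x) * k) / Real.cosh (k * x) ^ 2) := by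
    intro x
    have h1 : HasDerivAt (fun y : ℝ => k * y) k x := by
      simpa using (hasDerivAt_id x).const_mul k
    have h2 : HasDerivAt (fun y => Real.cosh (k * y)) (Real.sinh (k * x) * k) x :=
      (Real.hasDerivAt_cosh (k * x)).comp x h1
    have h3 : HasDerivAt (fun y => (Real.cosh (k * y))⁻¹)
        (-(Real.sinh (k * x) * k) / Real.cosh (k * x) ^ 2) x :=
      h2.inv (Real.cosh_pos (k * x)).ne'
    have h4 := h3.const_mul c
    have h5 : (fun y => c * (Real.cosh (k * y))⁻¹) = phiSol ω := by
      funext y; rw [phiSol, ← hkdef, ← hcdef, one_div]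
    rw [h5] at h4
    exact h4.deriv
  have e2 : ∀ x : ℝ, (deriv (phiSol ω) x) ^ 2
      = (2 * k ^ 4 * Real.tanh (k * x) ^ 2) / Real.cosh (k * x) ^ 2 := by
    intro x
    rw [hderiv x, Real.tanh_eq_sinh_div_cosh]
    have hc := (Real.cosh_pos (k * x)).ne'
    field_simp
    linear_combination Real.sinh (k * x) ^ 2 * hc2
  have I2 : ∫ x : ℝ, (deriv (phiSol ω) x) ^ 2 = 4 * k ^ 3 / 3 := by
    have := integral_tanh_sech k hk (fun t => 2 * k ^ 4 * t ^ 2)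
      (fun t => 2 * k ^ 4 * (t ^ 3 / 3))
      (fun t => by
        have : HasDerivAt (fun t : ℝ => t ^ 3 / 3) (t ^ 2) t := by
          simpa using (hasDerivAt_pow 3 t).div_const 3
        simpa using this.const_mul (2 * k ^ 4))
      (fun t => by ring) (fun t _ => by positivity)
    simp only [e2]
    rw [this]
    field_simp
    ring
  -- integral 3 : ∫ φ⁴
  have e3 : ∀ x : ℝ, phiSol ω x ^ 4
      = (4 * k ^ 4 * (1 - Real.tanh (k * x) ^ 2)) / Real.cosh (k * x) ^ 2 := by
    intro x
    have h := e1 x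
    have hc := (Real.cosh_pos (k * x)).ne'
    have htan : Real.tanh (k * x) ^ 2 = Real.sinh (k * x) ^ 2 / Real.cosh (k * x) ^ 2 := by
      rw [Real.tanh_eq_sinh_div_cosh]; ring
    have hcs := Real.cosh_sq_sub_sinh_sq (k * x)
    have : phiSol ω x ^ 4 = (phiSol ω x ^ 2) ^ 2 := by ring
    rw [this, h, htan]
    field_simp
    nlinarith [hcs, sq_nonneg (Real.cosh (k * x))]
  have I3 : ∫ x : ℝ, phiSol ω x ^ 4 = 16 * k ^ 3 / 3 := by
    have := integral_tanh_sech k hk (fun t => 4 * k ^ 4 * (1 - t ^ 2))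
      (fun t => 4 * k ^ 4 * (t - t ^ 3 / 3))
      (fun t => by
        have h3 : HasDerivAt (fun t : ℝ => t - t ^ 3 / 3) (1 - t ^ 2) t := by
          have := ((hasDerivAt_id' t).sub ((hasDerivAt_pow 3 t).div_const 3))
          exact this.congr_deriv (by norm_num)
        simpa using h3.const_mul (4 * k ^ 4))
      (fun t => by ring)
      (fun t ht => by
        have h1 : t ^ 2 ≤ 1 := by nlinarith [ht.1, ht.2]
        show (0:ℝ) ≤ 4 * k ^ 4 * (1 - t ^ 2)
        have : (0:ℝ) ≤ 1 - t ^ 2 := by linarith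
        positivity)
    simp only [e3]
    rw [this]
    field_simp
    ring
  -- integral 4 : ∫ φ₀² = 4
  have e0 : ∀ x : ℝ, phiSol 0 x ^ 2 = 2 / Real.cosh (1 * x) ^ 2 := by
    intro x
    rw [phiSol]
    norm_num
    rw [mul_pow, inv_pow, Real.sq_sqrt (by norm_num : (0:ℝ) ≤ 2), div_eq_mul_inv]
  have I0 : ∫ x : ℝ, phiSol 0 x ^ 2 = 4 := by
    have := integral_tanh_sech 1 one_pos (fun _ => (2:ℝ)) (fun t => 2 * t)
      (fun t => by simpa using (hasDerivAt_id t).const_mul (2:ℝ))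
      (fun t => rfl) (fun t _ => by norm_num)
    simp only [e0]
    rw [this]
    norm_num
  rw [I1, I2, I3, I0]
  linear_combination (-(2:ℝ) * k / 3) * hk2
end

section
/- Let ω ∈ (−1,1) and let φ_ω(x) = √(2(1−ω²)) · sech(√(1−ω²)·x). If f : ℝ → ℝ is a C² function with f(x) → 0 and f'(x) → 0 as |x| → ∞, satisfying −f'' + (1−ω²)f − 3φ_ω²·f = 0 on ℝ, then there exists c ∈ ℝ such that f = c·φ_ω'. In other words, the kernel of L₊ = −∂ₓ² + (1−ω²) − 3φ_ω² among decaying C² functions is spanned by φ_ω'. -/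
open Real Set Filter Topology

set_option maxHeartbeats 1000000 in
/-- The kernel of `L₊ = -∂ₓ² + (1-ω²) - 3φ_ω²` among decaying `C²` functions is spanned by
`φ_ω'`. -/
theorem Lplus_kernel (ω : ℝ) (hω : ω ∈ Ioo (-1 : ℝ) 1)
    (f : ℝ → ℝ) (hC2 : ContDiff ℝ 2 f)
    (hf_top : Tendsto f atTop (𝓝 0)) (hf_bot : Tendsto f atBot (𝓝 0))
    (hf'_top : Tendsto (deriv f) atTop (𝓝 0)) (hf'_bot : Tendsto (deriv f) atBot (𝓝 0))
    (heq : ∀ x : ℝ,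
      -(deriv (deriv f) x) + (1 - ω ^ 2) * f x - 3 * (phiSol ω x) ^ 2 * f x = 0) :
    ∃ c : ℝ, f = fun x => c * deriv (phiSol ω) x := by
  obtain ⟨hω1, hω2⟩ := hω
  have hpos : (0:ℝ) < 1 - ω ^ 2 := by nlinarith
  set b : ℝ := Real.sqrt (1 - ω ^ 2) with hbdef
  set a : ℝ := Real.sqrt (2 * (1 - ω ^ 2)) with hadef
  have hb : 0 < b := Real.sqrt_pos.mpr hpos
  have hb2 : b ^ 2 = 1 - ω ^ 2 := Real.sq_sqrt hpos.le
  have ha : 0 < a := Real.sqrt_pos.mpr (by linarith)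
  have ha2 : a ^ 2 = 2 * b ^ 2 := by rw [hadef, Real.sq_sqrt (by linarith), hb2]
  have hble : b ^ 2 ≤ 1 := by nlinarith
  -- explicit derivatives of the soliton
  set p1 : ℝ → ℝ := fun x => -(a * b) * (Real.sinh (b * x) / Real.cosh (b * x) ^ 2) with hp1def
  set p2 : ℝ → ℝ :=
    fun x => a * b ^ 2 * ((Real.cosh (b * x) ^ 2 - 2) / Real.cosh (b * x) ^ 3) with hp2def
  set p3 : ℝ → ℝ :=
    fun x => a * b ^ 3 *
      (Real.sinh (b * x) * (6 - Real.cosh (b * x) ^ 2) / Real.cosh (b * x) ^ 4) with hp3def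
  have hcoshne : ∀ x : ℝ, Real.cosh (b * x) ≠ 0 := fun x => (Real.cosh_pos _).ne'
  have hcosh : ∀ x : ℝ, HasDerivAt (fun y => Real.cosh (b * y)) (Real.sinh (b * x) * b) x := by
    intro x
    have hbx : HasDerivAt (fun y : ℝ => b * y) b x := by
      simpa using (hasDerivAt_id x).const_mul b
    exact hbx.cosh
  have hsinh : ∀ x : ℝ, HasDerivAt (fun y => Real.sinh (b * y)) (Real.cosh (b * x) * b) x := by
    intro x
    have hbx : HasDerivAt (fun y : ℝ => b * y) b x := by
      simpa using (hasDerivAt_id x).const_mul b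
    exact hbx.sinh
  have hD1 : ∀ x : ℝ, HasDerivAt (phiSol ω) (p1 x) x := by
    intro x
    have h0 : HasDerivAt (fun y => 1 / Real.cosh (b * y))
        ((0 * Real.cosh (b * x) - 1 * (Real.sinh (b * x) * b)) / Real.cosh (b * x) ^ 2) x :=
      (hasDerivAt_const x (1:ℝ)).div (hcosh x) (hcoshne x)
    have := h0.const_mul a
    refine this.congr_deriv (Eq.symm ?_)
    simp only [hp1def]
    field_simp
    ring
  have hD2 : ∀ x : ℝ, HasDerivAt p1 (p2 x) x := by
    intro x
    have hden : HasDerivAt (fun y => Real.cosh (b * y) ^ 2)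
        (2 * Real.cosh (b * x) ^ 1 * (Real.sinh (b * x) * b)) x := (hcosh x).pow 2
    have h0 := ((hsinh x).div hden (pow_ne_zero 2 (hcoshne x))).const_mul (-(a * b))
    refine h0.congr_deriv (Eq.symm ?_)
    have hs := Real.sinh_sq (b * x)
    simp only [hp2def]
    field_simp
    linear_combination (-2) * hs
  have hD3 : ∀ x : ℝ, HasDerivAt p2 (p3 x) x := by
    intro x
    have hnum : HasDerivAt (fun y => Real.cosh (b * y) ^ 2 - 2)
        (2 * Real.cosh (b * x) ^ 1 * (Real.sinh (b * x) * b)) x :=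
      ((hcosh x).pow 2).sub_const 2
    have hden : HasDerivAt (fun y => Real.cosh (b * y) ^ 3)
        (3 * Real.cosh (b * x) ^ 2 * (Real.sinh (b * x) * b)) x := (hcosh x).pow 3
    have h0 := (hnum.div hden (pow_ne_zero 3 (hcoshne x))).const_mul (a * b ^ 2)
    refine h0.congr_deriv (Eq.symm ?_)
    simp only [hp3def]
    field_simp
    ring
  -- φ' solves the linearized equation
  have hode : ∀ x : ℝ, p3 x = (1 - ω ^ 2) * p1 x - 3 * (phiSol ω x) ^ 2 * p1 x := by
    intro x
    have hphi : phiSol ω x = a * (1 / Real.cosh (b * x)) := rfl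
    rw [hphi, ← hb2]
    simp only [hp3def, hp1def]
    field_simp
    linear_combination (-3 * Real.sinh (b*x)) * ha2
  -- facts about f
  have hf1 : ∀ x : ℝ, HasDerivAt f (deriv f x) x := fun x =>
    (hC2.differentiable (by norm_num) x).hasDerivAt
  have hC1' : ContDiff ℝ 1 (deriv f) := by
    have := (contDiff_succ_iff_deriv (n := 1)).mp (by exact_mod_cast hC2)
    exact this.2.2
  have hf2 : ∀ x : ℝ, HasDerivAt (deriv f) (deriv (deriv f) x) x := fun x =>
    (hC1'.differentiable one_ne_zero x).hasDerivAt
  have heq' : ∀ x : ℝ, deriv (deriv f) x = ((1 - ω ^ 2) - 3 * (phiSol ω x) ^ 2) * f x := by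
    intro x
    have := heq x
    ring_nf at this ⊢
    linarith
  -- the Wronskian
  set W : ℝ → ℝ := fun x => f x * p2 x - deriv f x * p1 x with hWdef
  have hW' : ∀ x : ℝ, HasDerivAt W 0 x := by
    intro x
    have h0 := ((hf1 x).mul (hD3 x)).sub ((hf2 x).mul (hD2 x))
    refine h0.congr_deriv (Eq.symm ?_)
    rw [heq' x, hode x]
    ring
  have hWconst : ∀ x : ℝ, W x = W 0 := by
    intro x
    have := is_const_of_deriv_eq_zero (fun y => (hW' y).differentiableAt)
      (fun y => (hW' y).deriv) x 0
    exact this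
  -- W → 0 at +∞, so W ≡ 0
  have habs_sinh : ∀ y : ℝ, |Real.sinh y| ≤ Real.cosh y := by
    intro y
    rw [abs_le]
    refine ⟨?_, (Real.sinh_lt_cosh y).le⟩
    have := Real.sinh_lt_cosh (-y)
    rw [Real.sinh_neg, Real.cosh_neg] at this
    linarith
  have hboundp1 : ∀ x : ℝ, |p1 x| ≤ a * b := by
    intro x
    simp only [hp1def]
    rw [abs_mul, abs_neg, abs_of_pos (mul_pos ha hb), abs_div,
      abs_of_pos (pow_pos (Real.cosh_pos _) 2)]
    have h4 := Real.one_le_cosh (b * x)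
    have h5 := habs_sinh (b * x)
    have h6 : |Real.sinh (b * x)| / Real.cosh (b * x) ^ 2 ≤ 1 := by
      rw [div_le_one (by positivity)]
      nlinarith [abs_nonneg (Real.sinh (b * x))]
    calc a * b * (|Real.sinh (b * x)| / Real.cosh (b * x) ^ 2) ≤ a * b * 1 :=
          mul_le_mul_of_nonneg_left h6 (by positivity)
      _ = a * b := mul_one _
  have hboundp2 : ∀ x : ℝ, |p2 x| ≤ 3 * (a * b ^ 2) := by
    intro x
    simp only [hp2def]
    rw [abs_mul, abs_of_pos (mul_pos ha (pow_pos hb 2))]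
    have h4 : (1:ℝ) ≤ Real.cosh (b*x) := Real.one_le_cosh _
    have h1 : |(Real.cosh (b * x) ^ 2 - 2) / Real.cosh (b * x) ^ 3| ≤ 3 := by
      rw [abs_div, abs_of_pos (pow_pos (Real.cosh_pos _) 3)]
      rw [div_le_iff₀ (pow_pos (Real.cosh_pos _) 3)]
      rw [abs_le]
      constructor <;> nlinarith
    nlinarith [abs_nonneg ((Real.cosh (b * x) ^ 2 - 2) / Real.cosh (b * x) ^ 3),
      mul_pos ha (pow_pos hb 2)]
  have hWtop : Tendsto W atTop (𝓝 0) := by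
    have hg : Tendsto (fun x => 3 * (a * b ^ 2) * |f x| + a * b * |deriv f x|) atTop (𝓝 0) := by
      have h1 : Tendsto (fun x => |f x|) atTop (𝓝 0) := by
        simpa using hf_top.abs
      have h2 : Tendsto (fun x => |deriv f x|) atTop (𝓝 0) := by
        simpa using hf'_top.abs
      have := (h1.const_mul (3 * (a * b ^ 2))).add (h2.const_mul (a * b))
      simpa using this
    apply squeeze_zero_norm _ hg
    intro x
    simp only [hWdef, Real.norm_eq_abs]
    calc |f x * p2 x - deriv f x * p1 x| ≤ |f x * p2 x| + |deriv f x * p1 x| := abs_sub _ _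
      _ ≤ 3 * (a * b ^ 2) * |f x| + a * b * |deriv f x| := by
          have e1 : |f x * p2 x| = |f x| * |p2 x| := abs_mul _ _
          have e2 : |deriv f x * p1 x| = |deriv f x| * |p1 x| := abs_mul _ _
          rw [e1, e2]
          have h1 : |f x| * |p2 x| ≤ |f x| * (3 * (a * b ^ 2)) :=
            mul_le_mul_of_nonneg_left (hboundp2 x) (abs_nonneg _)
          have h2 : |deriv f x| * |p1 x| ≤ |deriv f x| * (a * b) :=
            mul_le_mul_of_nonneg_left (hboundp1 x) (abs_nonneg _)
          nlinarith [h1, h2]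
  have hW0 : W 0 = 0 := by
    have h1 : Tendsto W atTop (𝓝 (W 0)) := by
      have : W = fun _ => W 0 := funext hWconst
      rw [this]
      exact tendsto_const_nhds
    exact tendsto_nhds_unique h1 hWtop
  have hWzero : ∀ x : ℝ, W x = 0 := fun x => (hWconst x).trans hW0
  -- values at 0
  have hp10 : p1 0 = 0 := by simp [hp1def]
  have hp20 : p2 0 = -(a * b ^ 2) := by
    simp only [hp2def, mul_zero, Real.cosh_zero]
    norm_num
  have hf0 : f 0 = 0 := by
    have h0 := hWzero 0
    simp only [hWdef, hp10, hp20, mul_zero, sub_zero] at h0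
    exact (mul_eq_zero.mp h0).resolve_right (neg_ne_zero.mpr (by positivity))
  -- the candidate constant
  set c : ℝ := deriv f 0 / (-(a * b ^ 2)) with hcdef
  refine ⟨c, ?_⟩
  -- the difference g solves the ODE with zero initial data
  set q : ℝ → ℝ := fun x => (1 - ω ^ 2) - 3 * (phiSol ω x) ^ 2 with hqdef
  have hqbd : ∀ x : ℝ, |q x| ≤ 7 := by
    intro x
    have hphi : phiSol ω x = a * (1 / Real.cosh (b * x)) := rfl
    have h4 : (1:ℝ) ≤ Real.cosh (b*x) := Real.one_le_cosh _
    have hphibd : (phiSol ω x) ^ 2 ≤ 2 * b ^ 2 := by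
      rw [hphi]
      have : (a * (1 / Real.cosh (b * x))) ^ 2 = a ^ 2 / Real.cosh (b*x) ^ 2 := by
        field_simp
      rw [this, ha2]
      have : (1:ℝ) ≤ Real.cosh (b*x) ^ 2 := by nlinarith
      rw [div_le_iff₀ (by nlinarith : (0:ℝ) < Real.cosh (b*x)^2)]
      nlinarith [sq_nonneg b]
    have hphinn : (0:ℝ) ≤ (phiSol ω x) ^ 2 := sq_nonneg _
    rw [hqdef, abs_le]
    constructor <;> simp only [] <;> nlinarith
  set g : ℝ → ℝ := fun x => f x - c * p1 x with hgdef
  set g' : ℝ → ℝ := fun x => deriv f x - c * p2 x with hg'def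
  have hg0 : g 0 = 0 := by simp [hgdef, hp10, hf0]
  have hg'0 : g' 0 = 0 := by
    have hne : a * b ^ 2 ≠ 0 := by positivity
    simp only [hg'def, hp20, hcdef]
    field_simp
    ring
  have hgD : ∀ x : ℝ, HasDerivAt g (g' x) x := fun x => (hf1 x).sub ((hD2 x).const_mul c)
  have hg'D : ∀ x : ℝ, HasDerivAt g' (q x * g x) x := by
    intro x
    have h0 := (hf2 x).sub ((hD3 x).const_mul c)
    refine h0.congr_deriv (Eq.symm ?_)
    rw [heq' x, hode x]
    simp only [hqdef, hgdef]
    ring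
  -- the ODE system and uniqueness
  set u : ℝ → ℝ × ℝ := fun x => (g x, g' x) with hudef
  set v : ℝ → ℝ × ℝ → ℝ × ℝ := fun t p => (p.2, q t * p.1) with hvdef
  have hlip : ∀ t : ℝ, LipschitzWith 7 (v t) := by
    intro t
    apply LipschitzWith.of_dist_le_mul
    intro p p'
    simp only [hvdef, Prod.dist_eq, Real.dist_eq]
    have h7 : ((7:NNReal):ℝ) = 7 := by norm_num
    rw [h7]
    have hd1 : |p.1 - p'.1| ≤ max |p.1 - p'.1| |p.2 - p'.2| := le_max_left _ _
    have hd2 : |p.2 - p'.2| ≤ max |p.1 - p'.1| |p.2 - p'.2| := le_max_right _ _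
    have hq := hqbd t
    have habs : |q t * p.1 - q t * p'.1| = |q t| * |p.1 - p'.1| := by
      rw [← abs_mul]; ring_nf
    apply max_le
    · nlinarith [abs_nonneg (p.1 - p'.1), abs_nonneg (p.2 - p'.2)]
    · rw [habs]
      nlinarith [abs_nonneg (p.1 - p'.1), abs_nonneg (p.2 - p'.2), abs_nonneg (q t)]
  have huD : ∀ t : ℝ, HasDerivAt u (v t (u t)) t := by
    intro t
    exact (hgD t).prodMk (hg'D t)
  have hu : ∀ x : ℝ, u x = (0, 0) := by
    intro x
    have hmem : (0:ℝ) ∈ Ioo (-(|x| + 1)) (|x| + 1) := by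
      constructor
      · nlinarith [abs_nonneg x]
      · nlinarith [abs_nonneg x]
    have hxmem : x ∈ Ioo (-(|x| + 1)) (|x| + 1) := by
      constructor
      · nlinarith [abs_nonneg x, neg_abs_le x]
      · nlinarith [le_abs_self x]
    have := ODE_solution_unique_of_mem_Ioo (v := v) (K := 7) (s := fun _ => (univ : Set (ℝ × ℝ)))
      (f := u) (g := fun _ => ((0:ℝ), (0:ℝ))) (t₀ := 0)
      (fun t _ => (hlip t).lipschitzOnWith)
      hmem
      (fun t _ => ⟨huD t, mem_univ _⟩)
      (fun t _ => ⟨(hasDerivAt_const t ((0:ℝ),(0:ℝ))).congr_deriv (by simp [hvdef]; rfl), mem_univ _⟩)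
      (by simp [hudef, hg0, hg'0])
    exact this hxmem
  funext x
  have := hu x
  rw [hudef] at this
  have hgx : g x = 0 := by
    have := congrArg Prod.fst this
    simpa using this
  have hderiv : deriv (phiSol ω) x = p1 x := (hD1 x).deriv
  rw [hderiv]
  simp only [hgdef] at hgx
  linarith
end

section
/- Let ω ∈ (−1,1) and let φ_ω(x) = √(2(1−ω²)) · sech(√(1−ω²)·x). If f : ℝ → ℝ is a C² function with f(x) → 0 and f'(x) → 0 as |x| → ∞, satisfying −f'' + (1−ω²)f − φ_ω²·f = 0 on ℝ, then there exists c ∈ ℝ such that f = c·φ_ω. In other words, the kernel of L₋ = −∂ₓ² + (1−ω²) − φ_ω² among decaying C² functions is spanned by φ_ω. -/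
open Real Set Filter Topology

/-- The kernel of `L₋ = -∂ₓ² + (1-ω²) - φ_ω²` among decaying `C²` functions is spanned by
`φ_ω`. -/
theorem Lminus_kernel (ω : ℝ) (hω : ω ∈ Ioo (-1 : ℝ) 1)
    (f : ℝ → ℝ) (hC2 : ContDiff ℝ 2 f)
    (hf_top : Tendsto f atTop (𝓝 0)) (hf_bot : Tendsto f atBot (𝓝 0))
    (hf'_top : Tendsto (deriv f) atTop (𝓝 0)) (hf'_bot : Tendsto (deriv f) atBot (𝓝 0))
    (heq : ∀ x : ℝ,
      -(deriv (deriv f) x) + (1 - ω ^ 2) * f x - (phiSol ω x) ^ 2 * f x = 0) :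
    ∃ c : ℝ, f = fun x => c * phiSol ω x := by
  obtain ⟨hω1, hω2⟩ := hω
  have hω2lt : ω ^ 2 < 1 := by nlinarith
  set k : ℝ := Real.sqrt (1 - ω ^ 2) with hk_def
  have hkpos : 0 < k := Real.sqrt_pos.mpr (by linarith)
  have hk2 : k ^ 2 = 1 - ω ^ 2 := Real.sq_sqrt (by linarith)
  set A : ℝ := Real.sqrt (2 * (1 - ω ^ 2)) with hA_def
  have hApos : 0 < A := Real.sqrt_pos.mpr (by nlinarith)
  have hA2 : A ^ 2 = 2 * k ^ 2 := by rw [hk2]; exact Real.sq_sqrt (by nlinarith)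
  set φ : ℝ → ℝ := phiSol ω with hφ_def
  have hφ_eq : ∀ x, φ x = A * (Real.cosh (k * x))⁻¹ := by
    intro x; simp only [hφ_def, phiSol, one_div]; rfl
  have hcosh_pos : ∀ x : ℝ, 0 < Real.cosh (k * x) := fun x => Real.cosh_pos _
  have hcosh_ne : ∀ x : ℝ, Real.cosh (k * x) ≠ 0 := fun x => (hcosh_pos x).ne'
  have hφ_pos : ∀ x, 0 < φ x := by
    intro x; rw [hφ_eq]; positivity
  -- derivative of φ
  set D : ℝ → ℝ := fun x => -(A * k) * Real.sinh (k * x) / (Real.cosh (k * x)) ^ 2 with hD_def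
  have hcosh_deriv : ∀ x : ℝ, HasDerivAt (fun x => Real.cosh (k * x))
      (Real.sinh (k * x) * k) x := by
    intro x
    exact (Real.hasDerivAt_cosh (k * x)).comp x
      (by simpa using (hasDerivAt_id x).const_mul k)
  have hsinh_deriv : ∀ x : ℝ, HasDerivAt (fun x => Real.sinh (k * x))
      (Real.cosh (k * x) * k) x := by
    intro x
    exact (Real.hasDerivAt_sinh (k * x)).comp x
      (by simpa using (hasDerivAt_id x).const_mul k)
  have hφD : ∀ x, HasDerivAt φ (D x) x := by
    intro x
    have h1 : HasDerivAt (fun x => A * (Real.cosh (k * x))⁻¹)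
        (A * (-(Real.sinh (k * x) * k) / (Real.cosh (k * x)) ^ 2)) x :=
      ((hcosh_deriv x).inv (hcosh_ne x)).const_mul A
    have h2 : (fun x => A * (Real.cosh (k * x))⁻¹) = φ := by
      funext y; rw [hφ_eq]
    rw [h2] at h1
    convert h1 using 1
    simp [hD_def]; ring
  -- second derivative of φ : D' = k² φ - φ³
  have hDD : ∀ x, HasDerivAt D (k ^ 2 * φ x - (φ x) ^ 3) x := by
    intro x
    have hinv : HasDerivAt (fun x => ((Real.cosh (k * x)) ^ 2)⁻¹)
        (-(2 * Real.cosh (k * x) ^ 1 * (Real.sinh (k * x) * k)) /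
          ((Real.cosh (k * x)) ^ 2) ^ 2) x :=
      (((hcosh_deriv x).pow 2).inv (pow_ne_zero 2 (hcosh_ne x)))
    have h1 : HasDerivAt (fun x => -(A * k) * (Real.sinh (k * x) *
        ((Real.cosh (k * x)) ^ 2)⁻¹))
        (-(A * k) * ((Real.cosh (k * x) * k) * ((Real.cosh (k * x)) ^ 2)⁻¹ +
          Real.sinh (k * x) * (-(2 * Real.cosh (k * x) ^ 1 * (Real.sinh (k * x) * k)) /
          ((Real.cosh (k * x)) ^ 2) ^ 2))) x :=
      ((hsinh_deriv x).mul hinv).const_mul (-(A * k))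
    have h2 : (fun x => -(A * k) * (Real.sinh (k * x) * ((Real.cosh (k * x)) ^ 2)⁻¹)) = D := by
      funext y; simp [hD_def]; ring
    rw [h2] at h1
    convert h1 using 1
    rw [hφ_eq]
    have hc := hcosh_ne x
    have hsq : Real.sinh (k * x) ^ 2 = Real.cosh (k * x) ^ 2 - 1 := by
      have := Real.cosh_sq (k * x); linarith
    field_simp
    linear_combination (-1 : ℝ) * hA2 +
      (-(2 * k ^ 2)) * hsq
  -- f is twice differentiable
  have hf1 : Differentiable ℝ f := hC2.differentiable (by norm_num)
  have hf2 : Differentiable ℝ (deriv f) := by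
    have h := (contDiff_succ_iff_deriv (n := 1)).mp (by exact_mod_cast hC2)
    exact h.2.2.differentiable (by norm_num)
  have hfD : ∀ x, HasDerivAt f (deriv f x) x := fun x => (hf1 x).hasDerivAt
  have hfDD : ∀ x, HasDerivAt (deriv f) (deriv (deriv f) x) x := fun x => (hf2 x).hasDerivAt
  -- Wronskian
  set W : ℝ → ℝ := fun x => f x * D x - deriv f x * φ x with hW_def
  have hW' : ∀ x, HasDerivAt W 0 x := by
    intro x
    have h1 : HasDerivAt W
        ((deriv f x * D x + f x * (k ^ 2 * φ x - (φ x) ^ 3)) -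
          (deriv (deriv f) x * φ x + deriv f x * D x)) x :=
      ((hfD x).mul (hDD x)).sub ((hfDD x).mul (hφD x))
    convert h1 using 1
    have he := heq x
    have hf'' : deriv (deriv f) x = (1 - ω ^ 2) * f x - (φ x) ^ 2 * f x := by
      rw [hφ_def] at *; linarith
    rw [hf'', ← hk2]; ring
  have hWconst : ∀ x, W x = W 0 := by
    intro x
    exact is_const_of_deriv_eq_zero (fun y => (hW' y).differentiableAt)
      (fun y => (hW' y).deriv) x 0
  -- W tends to 0 at +∞
  have hφ_bdd : ∀ x, |φ x| ≤ A := by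
    intro x
    rw [hφ_eq, abs_of_pos (by positivity)]
    have h1 : (Real.cosh (k * x))⁻¹ ≤ 1 := by
      rw [inv_le_one_iff₀]; right; exact Real.one_le_cosh _
    nlinarith
  have hD_bdd : ∀ x, |D x| ≤ A * k := by
    intro x
    have hs : |Real.sinh (k * x)| ≤ Real.cosh (k * x) := by
      have := Real.cosh_sq (k * x)
      nlinarith [abs_nonneg (Real.sinh (k * x)), sq_abs (Real.sinh (k * x)),
        (hcosh_pos x)]
    have hc1 : 1 ≤ Real.cosh (k * x) := Real.one_le_cosh _
    rw [hD_def]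
    rw [abs_div, abs_mul, abs_neg, abs_mul, abs_of_pos hApos, abs_of_pos hkpos,
      abs_pow, abs_of_pos (hcosh_pos x)]
    rw [div_le_iff₀ (by positivity)]
    have h3 : |Real.sinh (k * x)| ≤ Real.cosh (k * x) ^ 2 := le_trans hs (by nlinarith)
    have h4 := mul_le_mul_of_nonneg_left h3 (le_of_lt (mul_pos hApos hkpos))
    linarith
  have hW_top : Tendsto W atTop (𝓝 0) := by
    apply squeeze_zero_norm (a := fun x => |f x| * (A * k) + |deriv f x| * A)
    · intro x
      have h1 : |W x| ≤ |f x| * |D x| + |deriv f x| * |φ x| := by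
        rw [hW_def]
        calc |f x * D x - deriv f x * φ x| ≤ |f x * D x| + |deriv f x * φ x| :=
              abs_sub _ _
          _ = |f x| * |D x| + |deriv f x| * |φ x| := by rw [abs_mul, abs_mul]
      calc ‖W x‖ = |W x| := rfl
        _ ≤ |f x| * |D x| + |deriv f x| * |φ x| := h1
        _ ≤ |f x| * (A * k) + |deriv f x| * A :=
            add_le_add (mul_le_mul_of_nonneg_left (hD_bdd x) (abs_nonneg _))
              (mul_le_mul_of_nonneg_left (hφ_bdd x) (abs_nonneg _))
    · have h1 : Tendsto (fun x => |f x|) atTop (𝓝 0) := by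
        simpa using hf_top.abs
      have h2 : Tendsto (fun x => |deriv f x|) atTop (𝓝 0) := by
        simpa using hf'_top.abs
      have := (h1.mul_const (A * k)).add (h2.mul_const A)
      simpa using this
  have hW0 : W 0 = 0 := by
    have h1 : Tendsto W atTop (𝓝 (W 0)) := by
      have : W = fun _ => W 0 := funext hWconst
      rw [this]; exact tendsto_const_nhds
    exact tendsto_nhds_unique h1 hW_top
  have hWzero : ∀ x, W x = 0 := fun x => (hWconst x).trans hW0
  -- f / φ is constant
  set g : ℝ → ℝ := fun x => f x / φ x with hg_def
  have hg' : ∀ x, HasDerivAt g 0 x := by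
    intro x
    have h1 : HasDerivAt g ((deriv f x * φ x - f x * D x) / (φ x) ^ 2) x :=
      (hfD x).div (hφD x) (hφ_pos x).ne'
    convert h1 using 1
    have hz : f x * D x - deriv f x * φ x = 0 := hWzero x
    have hz2 : deriv f x * φ x - f x * D x = 0 := by linarith
    rw [hz2]; simp
  have hgconst : ∀ x, g x = g 0 := by
    intro x
    exact is_const_of_deriv_eq_zero (fun y => (hg' y).differentiableAt)
      (fun y => (hg' y).deriv) x 0
  refine ⟨g 0, funext fun x => ?_⟩
  have h2 : f x / φ x = g 0 := hgconst x
  rw [div_eq_iff (hφ_pos x).ne'] at h2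
  exact h2
end

section
/- Let ω ∈ (−1,1) and let φ_ω(x) = √(2(1−ω²)) · sech(√(1−ω²)·x). If f : ℝ → ℂ is a C² function with f(x) → 0 and f'(x) → 0 as |x| → ∞, satisfying −f'' + (1−ω²)f − φ_ω²·f − 2φ_ω²·(Re f) = 0 on ℝ, then there exist real numbers a, b such that f = a·φ_ω' + b·(i·φ_ω). That is, the decaying solutions of this complex linearized equation form the real span of φ_ω' and iφ_ω. -/
open Real Set Filter Topology Complex


noncomputable def Phi (A k x : ℝ) : ℝ := A * (Real.cosh (k*x))⁻¹
noncomputable def Phi' (A k x : ℝ) : ℝ := -(A*k) * Real.sinh (k*x) / Real.cosh (k*x)^2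
noncomputable def Phi'' (A k x : ℝ) : ℝ := (k^2 - Phi A k x^2) * Phi A k x

lemma cosh_ne (k x : ℝ) : Real.cosh (k*x) ≠ 0 := (Real.cosh_pos (x := k*x)).ne'

lemma hasDerivAt_kx (k x : ℝ) : HasDerivAt (fun y : ℝ => k*y) k x := by
  simpa using (hasDerivAt_id x).const_mul k

lemma hasDerivAt_cosh_kx (k x : ℝ) :
    HasDerivAt (fun y => Real.cosh (k*y)) (Real.sinh (k*x) * k) x :=
  (Real.hasDerivAt_cosh (k*x)).comp x (hasDerivAt_kx k x)

lemma hasDerivAt_sinh_kx (k x : ℝ) :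
    HasDerivAt (fun y => Real.sinh (k*y)) (Real.cosh (k*x) * k) x :=
  (Real.hasDerivAt_sinh (k*x)).comp x (hasDerivAt_kx k x)

lemma hasDerivAt_Phi (A k x : ℝ) : HasDerivAt (Phi A k) (Phi' A k x) x := by
  have h := ((hasDerivAt_cosh_kx k x).inv (cosh_ne k x)).const_mul A
  refine h.congr_deriv (Eq.symm ?_)
  unfold Phi'
  field_simp

lemma hasDerivAt_Phi' (A k : ℝ) (hA2 : A^2 = 2*k^2) (x : ℝ) :
    HasDerivAt (Phi' A k) (Phi'' A k x) x := by
  have hnum := (hasDerivAt_sinh_kx k x).const_mul (-(A*k))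
  have hden := (hasDerivAt_cosh_kx k x).pow 2
  have h := hnum.div hden (pow_ne_zero 2 (cosh_ne k x))
  refine h.congr_deriv (Eq.symm ?_)
  have hc2 : Real.cosh (k*x)^2 = Real.sinh (k*x)^2 + 1 := Real.cosh_sq _
  unfold Phi'' Phi
  simp only [Pi.pow_apply]
  have hc := cosh_ne k x
  field_simp
  linear_combination (-(A * Real.cosh (k*x))) * hA2 + 2*k^2*A*Real.cosh (k*x) * hc2

lemma hasDerivAt_Phi'' (A k : ℝ) (hA2 : A^2 = 2*k^2) (x : ℝ) :
    HasDerivAt (Phi'' A k) ((k^2 - 3 * Phi A k x^2) * Phi' A k x) x := by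
  have ha := (hasDerivAt_Phi A k x).pow 2
  have hb := ha.const_sub (k^2)
  have h := hb.mul (hasDerivAt_Phi A k x)
  refine h.congr_deriv (Eq.symm ?_)
  simp only [Pi.pow_apply]
  ring

lemma tendsto_cosh_kx {k : ℝ} (hk : 0 < k) :
    Tendsto (fun x => Real.cosh (k*x)) atTop atTop := by
  have h1 : Tendsto (fun x : ℝ => k*x) atTop atTop :=
    Tendsto.const_mul_atTop hk tendsto_id
  have h2 : Tendsto (fun x : ℝ => Real.exp (k*x) / 2) atTop atTop :=
    (Real.tendsto_exp_atTop.comp h1).atTop_div_const two_pos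
  apply tendsto_atTop_mono _ h2
  intro x
  rw [Real.cosh_eq]
  have := Real.exp_pos (-(k*x))
  linarith

lemma tendsto_inv_cosh {k : ℝ} (hk : 0 < k) :
    Tendsto (fun x => (Real.cosh (k*x))⁻¹) atTop (𝓝 0) :=
  (tendsto_cosh_kx hk).inv_tendsto_atTop

lemma tendsto_Phi {A k : ℝ} (hk : 0 < k) : Tendsto (Phi A k) atTop (𝓝 0) := by
  have := (tendsto_inv_cosh hk).const_mul A
  show Tendsto (fun x => A * (Real.cosh (k*x))⁻¹) atTop (𝓝 0)
  simpa using this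

lemma tendsto_Phi' {A k : ℝ} (hk : 0 < k) (hA : 0 ≤ A) :
    Tendsto (Phi' A k) atTop (𝓝 0) := by
  apply squeeze_zero_norm (a := fun x => (A*k) * (Real.cosh (k*x))⁻¹)
  · intro x
    have hc : (0:ℝ) < Real.cosh (k*x) := Real.cosh_pos (k*x)
    have hs : |Real.sinh (k*x)| ≤ Real.cosh (k*x) := by
      nlinarith [Real.cosh_sq (k*x), _root_.sq_abs (Real.sinh (k*x)), abs_nonneg (Real.sinh (k*x))]
    have hAk : (0:ℝ) ≤ A*k := by positivity
    rw [Phi', Real.norm_eq_abs, abs_div, abs_mul, abs_neg, abs_mul,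
      _root_.abs_of_nonneg hA, _root_.abs_of_pos hk, _root_.abs_of_pos (pow_pos hc 2),
      div_le_iff₀ (pow_pos hc 2)]
    calc A * k * |Real.sinh (k*x)| ≤ A * k * Real.cosh (k*x) := by nlinarith
      _ = A * k * (Real.cosh (k*x))⁻¹ * Real.cosh (k*x) ^ 2 := by field_simp
  · simpa using (tendsto_inv_cosh hk).const_mul (A*k)

lemma tendsto_Phi'' {A k : ℝ} (hk : 0 < k) : Tendsto (Phi'' A k) atTop (𝓝 0) := by
  have h := (tendsto_const_nhds (x := k^2) (f := atTop)).sub ((tendsto_Phi (A := A) hk).pow 2)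
  have := h.mul (tendsto_Phi (A := A) hk)
  show Tendsto (fun x => (k^2 - Phi A k x^2) * Phi A k x) atTop (𝓝 0)
  simpa using this

lemma ode2_unique_zero (q : ℝ → ℝ) (Q : ℝ) (hQ : ∀ x, |q x| ≤ Q)
    (g g' : ℝ → ℝ) (hg : ∀ x, HasDerivAt g (g' x) x)
    (hg' : ∀ x, HasDerivAt g' (q x * g x) x)
    (h0 : g 0 = 0) (h0' : g' 0 = 0) : ∀ x, g x = 0 := by
  have hQ0 : 0 ≤ Q := le_trans (abs_nonneg _) (hQ 0)
  set K : NNReal := ⟨max 1 Q, le_trans zero_le_one (le_max_left _ _)⟩ with hKdef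
  have hKcoe : (K : ℝ) = max 1 Q := rfl
  set v : ℝ → ℝ × ℝ → ℝ × ℝ := fun t p => (p.2, q t * p.1) with hvdef
  have hv : ∀ t, LipschitzWith K (v t) := by
    intro t
    apply LipschitzWith.of_dist_le_mul
    intro p p'
    rw [hKcoe, Prod.dist_eq, Prod.dist_eq]
    simp only [hvdef, Real.dist_eq]
    apply max_le
    · calc |p.2 - p'.2| ≤ max |p.1 - p'.1| |p.2 - p'.2| := le_max_right _ _
        _ ≤ max 1 Q * max |p.1 - p'.1| |p.2 - p'.2| :=
          le_mul_of_one_le_left (le_max_of_le_right (abs_nonneg _)) (le_max_left _ _)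
    · have e1 : |q t * p.1 - q t * p'.1| = |q t| * |p.1 - p'.1| := by
        rw [← abs_mul]; ring_nf
      rw [e1]
      calc |q t| * |p.1 - p'.1| ≤ Q * max |p.1 - p'.1| |p.2 - p'.2| := by
            apply mul_le_mul (hQ t) (le_max_left _ _) (abs_nonneg _) hQ0
        _ ≤ max 1 Q * max |p.1 - p'.1| |p.2 - p'.2| := by
            apply mul_le_mul_of_nonneg_right (le_max_right _ _)
            exact le_max_of_le_right (abs_nonneg _)
  have hF : ∀ t, HasDerivAt (fun y => (g y, g' y)) (v t (g t, g' t)) t :=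
    fun t => (hg t).prodMk (hg' t)
  have hZ : ∀ t : ℝ, HasDerivAt (fun _ : ℝ => ((0:ℝ),(0:ℝ))) (v t ((0:ℝ),(0:ℝ))) t := by
    intro t
    have : v t ((0:ℝ),(0:ℝ)) = ((0:ℝ),(0:ℝ)) := by simp [hvdef]
    rw [this]
    exact hasDerivAt_const t _
  intro x
  have hx : x ∈ Icc (-(|x|+1)) (|x|+1) := by
    constructor
    · have := neg_abs_le x; linarith
    · have := le_abs_self x; linarith
  have h00 : (0:ℝ) ∈ Ioo (-(|x|+1)) (|x|+1) := by
    constructor <;> [skip; skip] <;> · have := abs_nonneg x; linarith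
  have key := ODE_solution_unique_of_mem_Icc (v := v) (s := fun _ => (univ : Set (ℝ×ℝ)))
    (fun t _ => (hv t).lipschitzOnWith) h00
    (fun t _ => (hF t).continuousAt.continuousWithinAt)
    (fun t _ => hF t) (fun _ _ => mem_univ _)
    continuous_const.continuousOn (fun t _ => hZ t) (fun _ _ => mem_univ _)
    (by simp [h0, h0'])
  have := key hx
  simpa using congrArg Prod.fst this

/-- The decaying `C²` solutions of the complex linearized equation
`-f'' + (1-ω²)f - φ_ω²f - 2φ_ω²(Re f) = 0` form the real span of `φ_ω'` and `iφ_ω`. -/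

theorem complex_linearized_kernel (ω : ℝ) (hω : ω ∈ Ioo (-1 : ℝ) 1)
    (f : ℝ → ℂ) (hC2 : ContDiff ℝ 2 f)
    (hf_top : Tendsto f atTop (𝓝 0)) (hf_bot : Tendsto f atBot (𝓝 0))
    (hf'_top : Tendsto (deriv f) atTop (𝓝 0)) (hf'_bot : Tendsto (deriv f) atBot (𝓝 0))
    (heq : ∀ x : ℝ,
      -(deriv (deriv f) x) + ((1 : ℂ) - (ω : ℂ) ^ 2) * f x
        - ((phiSol ω x : ℂ)) ^ 2 * f x - 2 * ((phiSol ω x : ℂ)) ^ 2 * ((f x).re : ℂ) = 0) :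
    ∃ a b : ℝ, f = fun x => (a : ℂ) * ((deriv (phiSol ω) x : ℝ) : ℂ)
      + (b : ℂ) * (Complex.I * (phiSol ω x : ℂ)) := by
  obtain ⟨hω1, hω2⟩ := hω
  have hω2lt : ω^2 < 1 := by nlinarith
  set k : ℝ := Real.sqrt (1 - ω^2) with hkdef
  set A : ℝ := Real.sqrt (2*(1 - ω^2)) with hAdef
  have hk2 : k^2 = 1 - ω^2 := Real.sq_sqrt (by linarith)
  have hk : 0 < k := Real.sqrt_pos.mpr (by linarith)
  have hA2 : A^2 = 2*k^2 := by rw [hAdef, Real.sq_sqrt (by linarith), hk2]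
  have hA : 0 < A := Real.sqrt_pos.mpr (by linarith)
  have hphi : phiSol ω = Phi A k := by
    funext x; rw [phiSol, Phi, one_div]
  -- smoothness of f
  have hC1d : ContDiff ℝ 1 (deriv f) := by
    have h := (contDiff_succ_iff_deriv (n := 1)).mp (by exact hC2)
    exact h.2.2
  have hdf : Differentiable ℝ f := hC2.differentiable two_ne_zero
  have hdf' : Differentiable ℝ (deriv f) := hC1d.differentiable one_ne_zero
  -- real and imaginary part derivatives
  have hre : ∀ (u : ℝ → ℂ) (u' : ℂ) (x : ℝ), HasDerivAt u u' x →
      HasDerivAt (fun y => (u y).re) u'.re x :=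
    fun u u' x h => Complex.reCLM.hasFDerivAt.comp_hasDerivAt x h
  have him : ∀ (u : ℝ → ℂ) (u' : ℂ) (x : ℝ), HasDerivAt u u' x →
      HasDerivAt (fun y => (u y).im) u'.im x :=
    fun u u' x h => Complex.imCLM.hasFDerivAt.comp_hasDerivAt x h
  have hf1D : ∀ x, HasDerivAt (fun y => (f y).re) ((deriv f x).re) x :=
    fun x => hre f _ x (hdf x).hasDerivAt
  have hf2D : ∀ x, HasDerivAt (fun y => (f y).im) ((deriv f x).im) x :=
    fun x => him f _ x (hdf x).hasDerivAt
  -- rearranged equation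
  have hdd : ∀ x, deriv (deriv f) x
      = (((1:ℂ) - (ω:ℂ)^2) - ((phiSol ω x : ℂ))^2) * f x
        - 2*((phiSol ω x : ℂ))^2*(((f x).re : ℂ)) := by
    intro x
    linear_combination -(heq x)
  have hcast : ∀ x, (((1:ℂ) - (ω:ℂ)^2) - ((phiSol ω x : ℂ))^2) * f x
        - 2*((phiSol ω x : ℂ))^2*(((f x).re : ℂ))
      = (((1 - ω^2 - phiSol ω x^2 : ℝ) : ℂ)) * f x
        - (((2 * phiSol ω x^2 : ℝ) : ℂ)) * (((f x).re : ℝ) : ℂ) := by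
    intro x; push_cast; ring
  have hddre : ∀ x, (deriv (deriv f) x).re = (k^2 - 3*Phi A k x^2) * (f x).re := by
    intro x
    rw [hdd x, hcast x, ← hphi]
    simp only [Complex.sub_re, Complex.mul_re, Complex.ofReal_re, Complex.ofReal_im]
    ring_nf
    linear_combination (-(f x).re) * hk2
  have hddim : ∀ x, (deriv (deriv f) x).im = (k^2 - Phi A k x^2) * (f x).im := by
    intro x
    rw [hdd x, hcast x, ← hphi]
    simp only [Complex.sub_im, Complex.mul_im, Complex.ofReal_re, Complex.ofReal_im]
    ring_nf
    linear_combination (-(f x).im) * hk2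
  have hf1D2 : ∀ x, HasDerivAt (fun y => (deriv f y).re)
      ((k^2 - 3*Phi A k x^2) * (f x).re) x := by
    intro x
    have h := hre (deriv f) _ x (hdf' x).hasDerivAt
    rwa [hddre x] at h
  have hf2D2 : ∀ x, HasDerivAt (fun y => (deriv f y).im)
      ((k^2 - Phi A k x^2) * (f x).im) x := by
    intro x
    have h := him (deriv f) _ x (hdf' x).hasDerivAt
    rwa [hddim x] at h
  -- limits of real/imag parts
  have hf1top : Tendsto (fun x => (f x).re) atTop (𝓝 0) := by
    simpa [Function.comp_def] using (Complex.continuous_re.tendsto 0).comp hf_top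
  have hf2top : Tendsto (fun x => (f x).im) atTop (𝓝 0) := by
    simpa [Function.comp_def] using (Complex.continuous_im.tendsto 0).comp hf_top
  have hf1'top : Tendsto (fun x => (deriv f x).re) atTop (𝓝 0) := by
    simpa [Function.comp_def] using (Complex.continuous_re.tendsto 0).comp hf'_top
  have hf2'top : Tendsto (fun x => (deriv f x).im) atTop (𝓝 0) := by
    simpa [Function.comp_def] using (Complex.continuous_im.tendsto 0).comp hf'_top
  -- values at 0
  have hPhi0 : Phi A k 0 = A := by simp [Phi]
  have hPhi'0 : Phi' A k 0 = 0 := by simp [Phi']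
  have hPhi''0 : Phi'' A k 0 = -(k^2) * A := by
    rw [Phi'', hPhi0]; linear_combination (-A) * hA2
  have hPhi''0ne : Phi'' A k 0 ≠ 0 := by
    rw [hPhi''0]
    have h : (-(k^2))*A < 0 := by nlinarith
    exact h.ne
  -- Wronskian for the real part
  have hW1D : ∀ x, HasDerivAt
      (fun x => (f x).re * Phi'' A k x - (deriv f x).re * Phi' A k x) 0 x := by
    intro x
    have h := ((hf1D x).mul (hasDerivAt_Phi'' A k hA2 x)).sub
      ((hf1D2 x).mul (hasDerivAt_Phi' A k hA2 x))
    refine h.congr_deriv (Eq.symm ?_)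
    rw [Phi'']
    ring
  have hW1const : ∀ x, (f x).re * Phi'' A k x - (deriv f x).re * Phi' A k x
      = (f 0).re * Phi'' A k 0 - (deriv f 0).re * Phi' A k 0 :=
    fun x => is_const_of_deriv_eq_zero (fun y => (hW1D y).differentiableAt)
      (fun y => (hW1D y).deriv) x 0
  have hW1top : Tendsto
      (fun x => (f x).re * Phi'' A k x - (deriv f x).re * Phi' A k x) atTop (𝓝 0) := by
    simpa using (hf1top.mul (tendsto_Phi'' (A := A) hk)).sub
      (hf1'top.mul (tendsto_Phi' hk hA.le))
  have hW10 : (f 0).re * Phi'' A k 0 - (deriv f 0).re * Phi' A k 0 = 0 := by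
    refine tendsto_nhds_unique ?_ hW1top
    exact Tendsto.congr (fun x => (hW1const x).symm) tendsto_const_nhds
  have hf10 : (f 0).re = 0 := by
    rw [hPhi'0, hPhi''0] at hW10
    have := mul_pos (mul_pos hk hk) hA
    rcases mul_eq_zero.mp (by linarith : (f 0).re * (-(k^2)*A) = 0) with h | h
    · exact h
    · exfalso; rw [hPhi''0] at hPhi''0ne; exact hPhi''0ne h
  -- Wronskian for the imaginary part
  have hW2D : ∀ x, HasDerivAt
      (fun x => (f x).im * Phi' A k x - (deriv f x).im * Phi A k x) 0 x := by
    intro x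
    have h := ((hf2D x).mul (hasDerivAt_Phi' A k hA2 x)).sub
      ((hf2D2 x).mul (hasDerivAt_Phi A k x))
    refine h.congr_deriv (Eq.symm ?_)
    rw [Phi'']
    ring
  have hW2const : ∀ x, (f x).im * Phi' A k x - (deriv f x).im * Phi A k x
      = (f 0).im * Phi' A k 0 - (deriv f 0).im * Phi A k 0 :=
    fun x => is_const_of_deriv_eq_zero (fun y => (hW2D y).differentiableAt)
      (fun y => (hW2D y).deriv) x 0
  have hW2top : Tendsto
      (fun x => (f x).im * Phi' A k x - (deriv f x).im * Phi A k x) atTop (𝓝 0) := by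
    simpa using (hf2top.mul (tendsto_Phi' hk hA.le)).sub
      (hf2'top.mul (tendsto_Phi (A := A) hk))
  have hW20 : (f 0).im * Phi' A k 0 - (deriv f 0).im * Phi A k 0 = 0 := by
    refine tendsto_nhds_unique ?_ hW2top
    exact Tendsto.congr (fun x => (hW2const x).symm) tendsto_const_nhds
  have hf2'0 : (deriv f 0).im = 0 := by
    rw [hPhi'0, hPhi0] at hW20
    rcases mul_eq_zero.mp (by linarith : (deriv f 0).im * A = 0) with h | h
    · exact h
    · exact absurd h hA.ne'
  -- bound on the potentials
  have hPhiSq : ∀ x, Phi A k x ^ 2 ≤ 2*k^2 := by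
    intro x
    have h1 : (1:ℝ) ≤ Real.cosh (k*x) := Real.one_le_cosh _
    have h2 : (Real.cosh (k*x))⁻¹ ≤ 1 := by
      rw [inv_le_one_iff₀]; right; exact h1
    have h3 : (0:ℝ) < (Real.cosh (k*x))⁻¹ := by positivity
    rw [Phi, mul_pow, ← hA2]
    have h4 : (Real.cosh (k*x))⁻¹ ^ 2 ≤ 1 := by nlinarith
    exact mul_le_of_le_one_right (sq_nonneg A) h4
  have hq1 : ∀ x, |k^2 - 3*Phi A k x^2| ≤ 7*k^2 := by
    intro x
    rw [abs_le]
    constructor <;> nlinarith [hPhiSq x, sq_nonneg (Phi A k x)]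
  have hq2 : ∀ x, |k^2 - Phi A k x^2| ≤ 7*k^2 := by
    intro x
    rw [abs_le]
    constructor <;> nlinarith [hPhiSq x, sq_nonneg (Phi A k x)]
  -- conclude via ODE uniqueness
  set a : ℝ := (deriv f 0).re / Phi'' A k 0 with hadef
  set b : ℝ := (f 0).im / A with hbdef
  have hg1 : ∀ x, (f x).re - a * Phi' A k x = 0 := by
    apply ode2_unique_zero (fun x => k^2 - 3*Phi A k x^2) (7*k^2) hq1
      _ (fun x => (deriv f x).re - a * Phi'' A k x)
    · intro x
      exact (hf1D x).sub ((hasDerivAt_Phi' A k hA2 x).const_mul a)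
    · intro x
      have h := (hf1D2 x).sub ((hasDerivAt_Phi'' A k hA2 x).const_mul a)
      refine h.congr_deriv (Eq.symm ?_)
      ring
    · rw [hf10, hPhi'0]; ring
    · rw [hadef, div_mul_cancel₀ _ hPhi''0ne]; ring
  have hg2 : ∀ x, (f x).im - b * Phi A k x = 0 := by
    apply ode2_unique_zero (fun x => k^2 - Phi A k x^2) (7*k^2) hq2
      _ (fun x => (deriv f x).im - b * Phi' A k x)
    · intro x
      exact (hf2D x).sub ((hasDerivAt_Phi A k x).const_mul b)
    · intro x
      have h := (hf2D2 x).sub ((hasDerivAt_Phi' A k hA2 x).const_mul b)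
      refine h.congr_deriv (Eq.symm ?_)
      rw [Phi'']
      ring
    · rw [hPhi0, hbdef, div_mul_cancel₀ _ hA.ne']; ring
    · rw [hPhi'0, hf2'0]; ring
  refine ⟨a, b, ?_⟩
  funext x
  have hr : (f x).re = a * Phi' A k x := by have := hg1 x; linarith
  have hi : (f x).im = b * Phi A k x := by have := hg2 x; linarith
  have hd : deriv (phiSol ω) x = Phi' A k x := by
    rw [hphi]; exact (hasDerivAt_Phi A k x).deriv
  rw [hd]
  apply Complex.ext
  · simp [hr, hphi, Complex.add_re, Complex.mul_re, Complex.ofReal_re, Complex.ofReal_im]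
  · simp [hi, hphi, Complex.add_im, Complex.mul_im, Complex.ofReal_re, Complex.ofReal_im]
end
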